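/- (Stability region of the two-queue one-server fluid MQMS system with exponential channels.) Let μ_1, μ_2 > 0 and let C_1, C_2 be independent exponential random variables with means μ_1 and μ_2 respectively. Then for all λ_1, λ_2 ≥ 0, the following are equivalent: (1) for every α_1, α_2 ≥ 0, α_1 λ_1 + α_2 λ_2 ≤ E[max(α_1 C_1, α_2 C_2)]; (2) λ_1 ≤ μ_1 and λ_2 ≤ μ_2 · √(1 − λ_1/μ_1) · (2 − √(1 − λ_1/μ_1)). -/

import Mathlib

open MeasureTheory ProbabilityTheory Finset Filter

noncomputable section

/-- Channel state space `S`: N×K matrices with entries in {0,…,M}. -/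
abbrev ChanState (N K M : ℕ) := Fin N → Fin K → Fin (M + 1)

/-- The real-valued channel matrix `C_s` of a channel state `s`. -/
def Cmat {N K M : ℕ} (s : ChanState N K M) : Fin N → Fin K → ℝ :=
  fun n k => ((s n k : ℕ) : ℝ)

/-- The 0/1 allocation matrix `I ∈ 𝓘` determined by an assignment `f` of servers to
queues: column `k` has its single 1 in row `f k`. -/
def allocMat {N K : ℕ} (f : Fin K → Fin N) : Fin N → Fin K → ℝ :=
  fun n k => if f k = n then 1 else 0

/-- The weight `Σ_n Σ_k α_n c_{n,k} I_{n,k}` of the allocation matrix `I = allocMat f`. -/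
def weight {N K : ℕ} (α : Fin N → ℝ) (c : Fin N → Fin K → ℝ) (f : Fin K → Fin N) : ℝ :=
  ∑ n, ∑ k, α n * c n k * allocMat f n k

/-- `max_{I ∈ 𝓘} Σ_n Σ_k α_n c_{n,k} I_{n,k}`. -/
def maxWeight {N K : ℕ} [NeZero N] (α : Fin N → ℝ) (c : Fin N → Fin K → ℝ) : ℝ :=
  Finset.univ.sup' Finset.univ_nonempty (weight α c)

/-- `b(α) = Σ_{s∈S} π_s max_{I∈𝓘} Σ_n Σ_k α_n (C_s)_{n,k} I_{n,k}`. -/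
def bCoef {N K M : ℕ} [NeZero N] (π : ChanState N K M → ℝ) (α : Fin N → ℝ) : ℝ :=
  ∑ s : ChanState N K M, π s * maxWeight α (Cmat s)

/-- The rate vector `R^{(g)}` of the deterministic policy `g`. -/
def rateVec {N K M : ℕ} (π : ChanState N K M → ℝ)
    (g : ChanState N K M → Fin K → Fin N) : Fin N → ℝ :=
  fun n => ∑ s : ChanState N K M, π s * ∑ k, Cmat s n k * allocMat (g s) n k

/-- The achievable-rate polytope `P`, the convex hull of the rate vectors of the
deterministic policies. -/
def ratePolytope {N K M : ℕ} (π : ChanState N K M → ℝ) : Set (Fin N → ℝ) :=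
  convexHull ℝ {r | ∃ g : ChanState N K M → Fin K → Fin N, r = rateVec π g}

/-- `W`: products of N−1 factors from {0,…,M}, viewed inside ℝ. -/
def Wset (N M : ℕ) : Set ℝ :=
  {w | ∃ m : Fin (N - 1) → ℕ, (∀ j, m j ≤ M) ∧ w = ∏ j, (m j : ℝ)}

/-- The set `V` of nonnegative weight vectors from the paper. -/
def Vset (N M : ℕ) : Set (Fin N → ℝ) :=
  {α | (∀ n, 0 ≤ α n) ∧
    ∀ U : Finset (Fin N), U.Nonempty → U ≠ Finset.univ →
      (∃ i ∈ U, α i ≠ 0) → (∃ j ∈ Uᶜ, α j ≠ 0) →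
      ∃ i ∈ U, ∃ j ∈ Uᶜ, ∃ m ∈ Finset.Icc 1 M, ∃ n ∈ Finset.Icc 1 M,
        0 < α i ∧ 0 < α j ∧ α i * (m : ℝ) = α j * (n : ℝ)}

/-- The product Bernoulli distribution on ON-OFF (M = 1) channel states. -/
def bernoulliPi {N K : ℕ} (p : Fin N → Fin K → ℝ) : ChanState N K 1 → ℝ :=
  fun s => ∏ n, ∏ k, (if (s n k : ℕ) = 1 then p n k else 1 - p n k)

end


section MyAux

open MeasureTheory ProbabilityTheory Set Real
open scoped ENNReal

lemma myExp_Iio_zero {r : ℝ} : expMeasure r (Set.Iio 0) = 0 := by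
  rw [expMeasure, gammaMeasure, withDensity_apply _ measurableSet_Iio]
  exact lintegral_gammaPDF_of_nonpos le_rfl

lemma myExp_ae_nonneg {r : ℝ} : ∀ᵐ x ∂(expMeasure r), 0 ≤ x := by
  rw [ae_iff]
  have : {x : ℝ | ¬ (0:ℝ) ≤ x} = Set.Iio 0 := by ext x; simp
  rw [this]; exact myExp_Iio_zero

lemma myExp_Ioi {r : ℝ} (hr : 0 < r) {s : ℝ} (hs : 0 ≤ s) :
    expMeasure r (Set.Ioi s) = ENNReal.ofReal (Real.exp (-(r * s))) := by
  have : IsProbabilityMeasure (expMeasure r) := isProbabilityMeasure_expMeasure hr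
  have hIic : expMeasure r (Set.Iic s) = ENNReal.ofReal (1 - Real.exp (-(r * s))) := by
    rw [← ProbabilityTheory.ofReal_cdf]
    congr 1
    rw [cdf_expMeasure_eq hr, if_pos hs]
  have hcompl := measure_compl (μ := expMeasure r) (s := Set.Iic s)
    measurableSet_Iic (measure_ne_top _ _)
  rw [Set.compl_Iic] at hcompl
  have hle : Real.exp (-(r * s)) ≤ 1 := by
    rw [Real.exp_le_one_iff]
    simp only [Left.neg_nonpos_iff]
    positivity
  have hone : (1 : ℝ≥0∞) = ENNReal.ofReal 1 := ENNReal.ofReal_one.symm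
  rw [hcompl, hIic, measure_univ, hone, ← ENNReal.ofReal_sub 1 (sub_nonneg.2 hle)]
  norm_num

lemma myIntegrable_id_exp {r : ℝ} (hr : 0 < r) : Integrable id (expMeasure r) := by
  rw [expMeasure, gammaMeasure,
    show gammaPDF 1 r = fun x => ENNReal.ofReal (gammaPDFReal 1 r x) from rfl]
  rw [integrable_withDensity_iff (measurable_gammaPDFReal 1 r).ennreal_ofReal
    (Filter.Eventually.of_forall fun x => ENNReal.ofReal_lt_top)]
  have heq : ∀ x : ℝ, id x * (ENNReal.ofReal (gammaPDFReal 1 r x)).toReal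
      = Set.indicator (Set.Ioi (0:ℝ)) (fun x => r * (x * Real.exp (-(r * x)))) x := by
    intro x
    have hnn : 0 ≤ (if 0 ≤ x then r * Real.exp (-(r * x)) else 0) := by
      split_ifs with h
      · positivity
      · exact le_rfl
    rw [show ENNReal.ofReal (gammaPDFReal 1 r x) = exponentialPDF r x from rfl, exponentialPDF_eq,
      ENNReal.toReal_ofReal hnn]
    by_cases hx : x ∈ Set.Ioi (0:ℝ)
    · rw [Set.indicator_of_mem hx, if_pos (le_of_lt hx)]; simp only [id]; ring
    · rw [Set.indicator_of_notMem hx]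
      simp only [Set.mem_Ioi, not_lt] at hx
      rcases lt_or_eq_of_le hx with h | h
      · rw [if_neg (not_le.2 h)]; simp
      · simp [h]
  rw [show (fun x => id x * (ENNReal.ofReal (gammaPDFReal 1 r x)).toReal) = _ from funext heq]
  rw [integrable_indicator_iff measurableSet_Ioi]
  apply Integrable.const_mul
  have := integrableOn_rpow_mul_exp_neg_mul_rpow (p := 1) (s := 1) (by norm_num) (by norm_num) hr
  apply this.congr_fun _ measurableSet_Ioi
  intro x hx
  dsimp only
  rw [Real.rpow_one, neg_mul]

lemma myIntegral_exp_tail {c : ℝ} (hc : 0 < c) :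
    ∫ t in Set.Ioi (0:ℝ), Real.exp (-(c * t)) = 1 / c := by
  have h := MeasureTheory.integral_comp_mul_left_Ioi (fun u => Real.exp (-u)) 0 hc
  simp only [mul_zero, integral_exp_neg_Ioi, neg_zero, Real.exp_zero, smul_eq_mul,
    mul_one] at h
  rw [h, one_div]

lemma myIntegral_id_exp {r : ℝ} (hr : 0 < r) : ∫ x, x ∂(expMeasure r) = 1 / r := by
  have : IsProbabilityMeasure (expMeasure r) := isProbabilityMeasure_expMeasure hr
  have hnn : 0 ≤ᵐ[expMeasure r] id := by
    filter_upwards [myExp_ae_nonneg (r := r)] with x hx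
    simpa using hx
  have h := (myIntegrable_id_exp hr).integral_eq_integral_meas_lt hnn
  rw [show (∫ x, x ∂(expMeasure r)) = ∫ x, id x ∂(expMeasure r) from rfl, h,
    ← myIntegral_exp_tail hr]
  apply setIntegral_congr_fun measurableSet_Ioi
  intro t ht
  simp only [id]
  rw [show {a : ℝ | t < a} = Set.Ioi t from rfl, measureReal_def, myExp_Ioi hr (le_of_lt ht),
    ENNReal.toReal_ofReal (by positivity)]

variable {Ω : Type} [MeasurableSpace Ω]

lemma myNonnegC (μ : Measure Ω) {m : ℝ} {C : Ω → ℝ}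
    (hCm : Measurable C) (hC : μ.map C = expMeasure (1 / m)) :
    ∀ᵐ ω ∂μ, 0 ≤ C ω := by
  rw [ae_iff]
  have hset : {ω | ¬ (0:ℝ) ≤ C ω} = C ⁻¹' (Set.Iio 0) := by ext ω; simp [not_le]
  rw [hset, ← Measure.map_apply hCm measurableSet_Iio, hC, myExp_Iio_zero]

lemma myIntC (μ : Measure Ω) {m : ℝ} (hm : 0 < m) {C : Ω → ℝ}
    (hCm : Measurable C) (hC : μ.map C = expMeasure (1 / m)) :
    Integrable C μ := by
  have h := myIntegrable_id_exp (r := 1/m) (by positivity)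
  rw [← hC] at h
  exact (integrable_map_measure aestronglyMeasurable_id hCm.aemeasurable).1 h

lemma myMeanC (μ : Measure Ω) {m : ℝ} (hm : 0 < m) {C : Ω → ℝ}
    (hCm : Measurable C) (hC : μ.map C = expMeasure (1 / m)) :
    ∫ ω, C ω ∂μ = m := by
  have h : ∫ x, x ∂(μ.map C) = ∫ ω, C ω ∂μ :=
    integral_map hCm.aemeasurable aestronglyMeasurable_id
  rw [← h, hC, myIntegral_id_exp (by positivity), one_div_one_div]

lemma myTailC (μ : Measure Ω) {m : ℝ} (hm : 0 < m) {C : Ω → ℝ}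
    (hCm : Measurable C) (hC : μ.map C = expMeasure (1 / m))
    {a t : ℝ} (ha : 0 < a) (ht : 0 ≤ t) :
    μ {ω | t < a * C ω} = ENNReal.ofReal (Real.exp (-(1/(a*m) * t))) := by
  have hset : {ω | t < a * C ω} = C ⁻¹' (Set.Ioi (t / a)) := by
    ext ω
    simp only [Set.mem_preimage, Set.mem_Ioi, Set.mem_setOf_eq]
    rw [div_lt_iff₀ ha, mul_comm]
  rw [hset, ← Measure.map_apply hCm measurableSet_Ioi, hC,
    myExp_Ioi (by positivity) (by positivity),
    show (1/m) * (t/a) = 1/(a*m) * t by ring]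

set_option maxHeartbeats 1000000 in
lemma myFormula (μ : Measure Ω) [IsProbabilityMeasure μ]
    {m1 m2 : ℝ} (hm1 : 0 < m1) (hm2 : 0 < m2)
    {C1 C2 : Ω → ℝ} (hC1m : Measurable C1) (hC2m : Measurable C2)
    (hC1 : μ.map C1 = expMeasure (1 / m1)) (hC2 : μ.map C2 = expMeasure (1 / m2))
    (hind : IndepFun C1 C2 μ) {a b : ℝ} (ha : 0 < a) (hb : 0 < b) :
    ∫ ω, max (a * C1 ω) (b * C2 ω) ∂μ
      = ((a*m1)^2 + (a*m1)*(b*m2) + (b*m2)^2) / (a*m1 + b*m2) := by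
  have hA : 0 < a * m1 := by positivity
  have hB : 0 < b * m2 := by positivity
  set c1 : ℝ := 1/(a*m1) with hc1def
  set c2 : ℝ := 1/(b*m2) with hc2def
  have hc1 : 0 < c1 := by positivity
  have hc2 : 0 < c2 := by positivity
  have hint : Integrable (fun ω => max (a * C1 ω) (b * C2 ω)) μ := by
    have h1 : Integrable (fun ω => a * C1 ω) μ :=
      (myIntC μ hm1 hC1m hC1).const_mul a
    have h2 : Integrable (fun ω => b * C2 ω) μ :=
      (myIntC μ hm2 hC2m hC2).const_mul b
    exact (h1.sup h2).congr
      (Filter.Eventually.of_forall fun ω => by simp [Pi.sup_apply])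
  have hnn : 0 ≤ᵐ[μ] fun ω => max (a * C1 ω) (b * C2 ω) := by
    filter_upwards [myNonnegC μ hC1m hC1] with ω h
    exact le_max_of_le_left (by positivity)
  rw [hint.integral_eq_integral_meas_lt hnn]
  have hcong : ∀ t ∈ Set.Ioi (0:ℝ),
      (μ {ω | t < max (a * C1 ω) (b * C2 ω)}).toReal
        = Real.exp (-(c1*t)) + Real.exp (-(c2*t)) - Real.exp (-((c1+c2)*t)) := by
    intro t ht
    have ht' : (0:ℝ) ≤ t := le_of_lt ht
    have hU : {ω | t < max (a * C1 ω) (b * C2 ω)}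
        = {ω | t < a * C1 ω} ∪ {ω | t < b * C2 ω} := by
      ext ω; simp [lt_max_iff]
    have h1 := myTailC μ hm1 hC1m hC1 ha ht'
    have h2 := myTailC μ hm2 hC2m hC2 hb ht'
    have hs1 : {ω | t < a * C1 ω} = C1 ⁻¹' (Set.Ioi (t / a)) := by
      ext ω
      simp only [Set.mem_preimage, Set.mem_Ioi, Set.mem_setOf_eq]
      rw [div_lt_iff₀ ha, mul_comm]
    have hs2 : {ω | t < b * C2 ω} = C2 ⁻¹' (Set.Ioi (t / b)) := by
      ext ω
      simp only [Set.mem_preimage, Set.mem_Ioi, Set.mem_setOf_eq]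
      rw [div_lt_iff₀ hb, mul_comm]
    have hI : μ ({ω | t < a * C1 ω} ∩ {ω | t < b * C2 ω})
        = ENNReal.ofReal (Real.exp (-(c1*t)) * Real.exp (-(c2*t))) := by
      rw [hs1, hs2,
        (ProbabilityTheory.indepFun_iff_measure_inter_preimage_eq_mul.1 hind) _ _
          measurableSet_Ioi measurableSet_Ioi,
        ← hs1, ← hs2, h1, h2, ← ENNReal.ofReal_mul (by positivity)]
    have hkey := measure_union_add_inter (μ := μ) (s := {ω | t < a * C1 ω})
      (t := {ω | t < b * C2 ω}) (measurableSet_lt measurable_const (hC2m.const_mul b))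
    have htr := congrArg ENNReal.toReal hkey
    rw [ENNReal.toReal_add (measure_ne_top μ _) (measure_ne_top μ _),
      ENNReal.toReal_add (measure_ne_top μ _) (measure_ne_top μ _),
      hI, h1, h2, ENNReal.toReal_ofReal (by positivity),
      ENNReal.toReal_ofReal (by positivity),
      ENNReal.toReal_ofReal (by positivity)] at htr
    rw [hU]
    have hexp : Real.exp (-((c1+c2)*t)) = Real.exp (-(c1*t)) * Real.exp (-(c2*t)) := by
      rw [← Real.exp_add]; ring_nf
    rw [hexp]
    linarith
  simp only [measureReal_def]
  rw [setIntegral_congr_fun measurableSet_Ioi hcong]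
  have hi1 : IntegrableOn (fun t => Real.exp (-(c1*t))) (Set.Ioi (0:ℝ)) := by
    simpa [neg_mul] using exp_neg_integrableOn_Ioi 0 hc1
  have hi2 : IntegrableOn (fun t => Real.exp (-(c2*t))) (Set.Ioi (0:ℝ)) := by
    simpa [neg_mul] using exp_neg_integrableOn_Ioi 0 hc2
  have hi3 : IntegrableOn (fun t => Real.exp (-((c1+c2)*t))) (Set.Ioi (0:ℝ)) :=
    (exp_neg_integrableOn_Ioi 0 (by positivity : (0:ℝ) < c1 + c2)).congr_fun
      (fun x _ => by beta_reduce; rw [neg_mul]) measurableSet_Ioi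
  have hi12 : IntegrableOn (fun t => Real.exp (-(c1*t)) + Real.exp (-(c2*t)))
      (Set.Ioi (0:ℝ)) := hi1.add hi2
  rw [integral_sub hi12 hi3, integral_add hi1 hi2,
    myIntegral_exp_tail hc1, myIntegral_exp_tail hc2,
    myIntegral_exp_tail (by positivity : (0:ℝ) < c1 + c2), hc1def, hc2def]
  have hAB : (0:ℝ) < a * m1 + b * m2 := by positivity
  field_simp
  ring


end MyAux

set_option maxHeartbeats 4000000 in
/-- stability region of the two-queue one-server fluid MQMS system with
independent exponential channels: (λ₁, λ₂) ≥ 0 satisfies all weighted inequalities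
α₁λ₁ + α₂λ₂ ≤ E[max(α₁C₁, α₂C₂)] iff λ₁ ≤ μ₁ and
λ₂ ≤ μ₂·√(1 − λ₁/μ₁)·(2 − √(1 − λ₁/μ₁)). -/
theorem stmt_16
    {Ω : Type} [MeasurableSpace Ω] (μ : Measure Ω) [IsProbabilityMeasure μ]
    (μ1 μ2 : ℝ) (hμ1 : 0 < μ1) (hμ2 : 0 < μ2)
    (C1 C2 : Ω → ℝ) (hC1m : Measurable C1) (hC2m : Measurable C2)
    (hC1 : μ.map C1 = expMeasure (1 / μ1))
    (hC2 : μ.map C2 = expMeasure (1 / μ2))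
    (hind : IndepFun C1 C2 μ)
    (lam1 lam2 : ℝ) (hlam1 : 0 ≤ lam1) (hlam2 : 0 ≤ lam2) :
    (∀ α1 α2 : ℝ, 0 ≤ α1 → 0 ≤ α2 →
        α1 * lam1 + α2 * lam2 ≤ ∫ ω, max (α1 * C1 ω) (α2 * C2 ω) ∂μ)
      ↔ (lam1 ≤ μ1 ∧
          lam2 ≤ μ2 * Real.sqrt (1 - lam1 / μ1) * (2 - Real.sqrt (1 - lam1 / μ1))) := by
  have hnn1 := myNonnegC μ hC1m hC1
  have hnn2 := myNonnegC μ hC2m hC2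
  have hmean1 : ∫ ω, C1 ω ∂μ = μ1 := myMeanC μ hμ1 hC1m hC1
  have hmean2 : ∫ ω, C2 ω ∂μ = μ2 := myMeanC μ hμ2 hC2m hC2
  have hIntC1 : Integrable C1 μ := myIntC μ hμ1 hC1m hC1
  have hIntC2 : Integrable C2 μ := myIntC μ hμ2 hC2m hC2
  have hzero2 : ∀ a : ℝ, 0 ≤ a → ∫ ω, max (a * C1 ω) (0 * C2 ω) ∂μ = a * μ1 := by
    intro a haa
    have hae : (fun ω => max (a * C1 ω) (0 * C2 ω)) =ᵐ[μ] fun ω => a * C1 ω := by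
      filter_upwards [hnn1] with ω h
      rw [zero_mul, max_eq_left (by positivity)]
    rw [integral_congr_ae hae, integral_const_mul, hmean1]
  have hzero1 : ∀ a : ℝ, 0 ≤ a → ∫ ω, max (0 * C1 ω) (a * C2 ω) ∂μ = a * μ2 := by
    intro a haa
    have hae : (fun ω => max (0 * C1 ω) (a * C2 ω)) =ᵐ[μ] fun ω => a * C2 ω := by
      filter_upwards [hnn2] with ω h
      rw [zero_mul, max_eq_right (by positivity)]
    rw [integral_congr_ae hae, integral_const_mul, hmean2]
  have hx : lam1 ≤ μ1 → (0:ℝ) ≤ 1 - lam1 / μ1 := fun h => by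
    rw [sub_nonneg, div_le_one hμ1]; exact h
  constructor
  · intro h
    have hfirst : lam1 ≤ μ1 := by
      have h10 := h 1 0 zero_le_one le_rfl
      rw [hzero2 1 zero_le_one] at h10
      linarith
    refine ⟨hfirst, ?_⟩
    set s : ℝ := Real.sqrt (1 - lam1 / μ1) with hsdef
    have hs2 : s ^ 2 = 1 - lam1 / μ1 := Real.sq_sqrt (hx hfirst)
    have hs0 : 0 ≤ s := Real.sqrt_nonneg _
    have hs1 : s ≤ 1 := by
      rw [hsdef]
      exact Real.sqrt_le_one.2 (by nlinarith [div_nonneg hlam1 hμ1.le])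
    have hl1v : lam1 = μ1 * (1 - s ^ 2) := by
      rw [hs2]
      field_simp
      ring
    by_cases hseq1 : s = 1
    · -- lam1 = 0 case: weight (0, 1/μ2)
      have happ := h 0 (1/μ2) le_rfl (by positivity)
      rw [hzero1 (1/μ2) (by positivity)] at happ
      rw [hseq1]
      have : (1/μ2) * μ2 = 1 := by field_simp
      nlinarith [happ]
    · by_cases hs0' : s = 0
      · -- lam1 = μ1 case
        have hl1e : lam1 = μ1 := by rw [hl1v, hs0']; ring
        rw [hs0']
        have hgoal : lam2 ≤ 0 → lam2 ≤ μ2 * 0 * (2 - 0) := fun h => by linarith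
        apply hgoal
        by_contra hc
        push_neg at hc
        obtain ⟨n, hn⟩ := exists_nat_gt (μ2 / lam2)
        have hn0 : (0:ℝ) < n := lt_trans (by positivity) hn
        have happ := h (n / μ1) (1 / μ2) (by positivity) (by positivity)
        rw [myFormula μ hμ1 hμ2 hC1m hC2m hC1 hC2 hind
          (by positivity) (by positivity)] at happ
        have hA : (n / μ1 : ℝ) * μ1 = n := by field_simp
        have hB : (1 / μ2) * μ2 = 1 := by field_simp
        rw [hA, hB] at happ
        rw [le_div_iff₀ (by positivity : (0:ℝ) < (n:ℝ) + 1)] at happ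
        have hl : (n / μ1 : ℝ) * lam1 = n := by rw [hl1e]; field_simp
        rw [hl] at happ
        -- happ : (n + 1/μ2 * lam2) * (n + 1) ≤ n^2 + n*1 + 1^2
        have hq : (1/μ2) * lam2 * ((n:ℝ) + 1) ≤ 1 := by nlinarith [happ]
        have hq2 : lam2 * ((n:ℝ) + 1) ≤ μ2 := by
          have := mul_le_mul_of_nonneg_left hq hμ2.le
          calc lam2 * ((n:ℝ) + 1) = μ2 * ((1/μ2) * lam2 * ((n:ℝ)+1)) := by field_simp
          _ ≤ μ2 * 1 := this
          _ = μ2 := mul_one μ2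
        have hq3 : μ2 < lam2 * n := by
          rw [div_lt_iff₀ hc] at hn
          linarith
        nlinarith [hq2, hq3]
      · -- 0 < s < 1
        have hspos : 0 < s := lt_of_le_of_ne hs0 (Ne.symm hs0')
        have hslt1 : s < 1 := lt_of_le_of_ne hs1 hseq1
        have happ := h ((1 - s) * μ2) (s * μ1)
          (by nlinarith) (by positivity)
        rw [myFormula μ hμ1 hμ2 hC1m hC2m hC1 hC2 hind
          (by nlinarith : (0:ℝ) < (1 - s) * μ2) (by positivity)] at happ
        rw [le_div_iff₀ (by nlinarith : (0:ℝ) < (1-s)*μ2*μ1 + s*μ1*μ2)] at happ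
        rw [hl1v] at happ
        have hpos : (0:ℝ) < s * (μ1 * μ1) * μ2 := by positivity
        nlinarith [happ, hpos, mul_pos hμ1 hμ2, mul_pos (mul_pos hμ1 hμ1) (mul_pos hμ2 hμ2)]
  · rintro ⟨h1, h2⟩ α1 α2 hα1 hα2
    set s : ℝ := Real.sqrt (1 - lam1 / μ1) with hsdef
    have hs2 : s ^ 2 = 1 - lam1 / μ1 := Real.sq_sqrt (hx h1)
    have hs0 : 0 ≤ s := Real.sqrt_nonneg _
    have hs1 : s ≤ 1 := by
      rw [hsdef]
      exact Real.sqrt_le_one.2 (by nlinarith [div_nonneg hlam1 hμ1.le])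
    have hl1v : lam1 = μ1 * (1 - s ^ 2) := by
      rw [hs2]; field_simp; ring
    rcases eq_or_lt_of_le hα1 with h10 | h1p
    · rcases eq_or_lt_of_le hα2 with h20 | h2p
      · rw [← h10, ← h20]
        simp
      · rw [← h10, hzero1 α2 hα2]
        have hle2 : lam2 ≤ μ2 := by nlinarith [h2, hs2, hs0, hs1, sq_nonneg (1 - s)]
        nlinarith [mul_le_mul_of_nonneg_left hle2 hα2]
    · rcases eq_or_lt_of_le hα2 with h20 | h2p
      · rw [← h20, hzero2 α1 hα1]
        nlinarith [mul_le_mul_of_nonneg_left h1 (le_of_lt h1p)]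
      · rw [myFormula μ hμ1 hμ2 hC1m hC2m hC1 hC2 hind h1p h2p,
          le_div_iff₀ (by positivity : (0:ℝ) < α1 * μ1 + α2 * μ2), hl1v]
        nlinarith [sq_nonneg (s * (α1 * μ1 + α2 * μ2) - α2 * μ2),
          mul_le_mul_of_nonneg_left h2
            (by positivity : (0:ℝ) ≤ α2 * (α1 * μ1 + α2 * μ2)),
          mul_pos h1p hμ1, mul_pos h2p hμ2, hs0, hs1]
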